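/- arXiv:2209.14687 — 2 statements merged into one kernel-verified Lean document; each statement's English description precedes it below -/
import Mathlib

section
/- Let p(y|η) = p₀(y)·exp(ηᵀT(y) − φ(η)) be a family of probability densities on ℝᵈ belonging to the exponential family, with canonical parameter η ∈ ℝᵏ, sufficient statistic T : ℝᵈ → ℝᵏ differentiable, and a prior density p(η) on ℝᵏ. Define the marginal density p(y) = ∫ p(y|η) p(η) dη and, at a point y with p(y) > 0 and p₀(y) > 0, the posterior mean η̂(y) = (∫ η p(y|η) p(η) dη) / p(y). Assume p₀ is differentiable at y, the integrals defining p(y) and η̂(y) are finite, and differentiation under the integral sign is valid, i.e. ∇_y p(y) = ∫ ∇_y p(y|η) p(η) dη. Then Tweedie's formula holds: (∇_y T(y))ᵀ η̂(y) = ∇_y log p(y) − ∇_y log p₀(y). -/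
open MeasureTheory Real RealInnerProductSpace

private lemma hasGradientAt_of_inner {F : Type*} [NormedAddCommGroup F]
    [InnerProductSpace ℝ F] [CompleteSpace F] {f : F → ℝ} {D : F →L[ℝ] ℝ} {G x : F}
    (h : HasFDerivAt f D x) (hG : ∀ v, ⟪G, v⟫ = D v) : HasGradientAt f G x := by
  have hD : InnerProductSpace.toDual ℝ F G = D := by
    ext v; exact hG v
  rw [hasGradientAt_iff_hasFDerivAt, hD]
  exact h

private lemma gradient_inner_eq {F : Type*} [NormedAddCommGroup F]
    [InnerProductSpace ℝ F] [CompleteSpace F] {f : F → ℝ} {x : F}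
    (h : DifferentiableAt ℝ f x) (v : F) : ⟪gradient f x, v⟫ = fderiv ℝ f x v := by
  rw [gradient, ← InnerProductSpace.toDual_apply_apply,
    (InnerProductSpace.toDual ℝ F).apply_symm_apply (fderiv ℝ f x)]

/-- **Tweedie's formula for exponential families.**
Let `p(y|η) = p₀(y) · exp(⟪η, T y⟫ − φ η)` be an exponential-family density with
canonical parameter `η ∈ ℝᵏ` and differentiable sufficient statistic `T : ℝᵈ → ℝᵏ`,
and let `prior` be a prior density on the parameter. Define the marginal
`p y = ∫ η, p(y|η) prior η` and the posterior mean
`η̂ = (∫ η, p(y|η) prior η • η) / p y`. Assuming `p y > 0`, `p₀ y > 0`, the relevant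
integrals are finite, `p₀` is differentiable at `y`, and differentiation under the
integral sign is valid, we have
`(∇_y T(y))ᵀ η̂ = ∇_y log p(y) − ∇_y log p₀(y)`. -/
theorem tweedie_exponential_family
    {d k : ℕ}
    (p₀ : EuclideanSpace ℝ (Fin d) → ℝ)
    (T : EuclideanSpace ℝ (Fin d) → EuclideanSpace ℝ (Fin k))
    (φ : EuclideanSpace ℝ (Fin k) → ℝ)
    (prior : EuclideanSpace ℝ (Fin k) → ℝ)
    (pcond : EuclideanSpace ℝ (Fin d) → EuclideanSpace ℝ (Fin k) → ℝ)
    (hpcond : ∀ y η, pcond y η = p₀ y * Real.exp ((inner ℝ η (T y) : ℝ) - φ η))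
    (p : EuclideanSpace ℝ (Fin d) → ℝ)
    (hp : ∀ y, p y = ∫ η, pcond y η * prior η)
    (y : EuclideanSpace ℝ (Fin d))
    (ηhat : EuclideanSpace ℝ (Fin k))
    (hηhat : ηhat = (p y)⁻¹ • ∫ η, (pcond y η * prior η) • η)
    (hT : Differentiable ℝ T)
    (hp₀diff : DifferentiableAt ℝ p₀ y)
    (hpy : 0 < p y) (hp₀y : 0 < p₀ y)
    (hint1 : Integrable (fun η => pcond y η * prior η))
    (hint2 : Integrable (fun η => (pcond y η * prior η) • η))
    (hDUI : HasGradientAt p (∫ η, gradient (fun y' => pcond y' η * prior η) y) y) :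
    ContinuousLinearMap.adjoint (fderiv ℝ T y) ηhat
      = gradient (fun y' => Real.log (p y')) y
        - gradient (fun y' => Real.log (p₀ y')) y := by
  set A := ContinuousLinearMap.adjoint (fderiv ℝ T y) with hA
  set B := fderiv ℝ T y with hB
  set G : EuclideanSpace ℝ (Fin k) → EuclideanSpace ℝ (Fin d) := fun η =>
    ((p₀ y)⁻¹ * (pcond y η * prior η)) • gradient p₀ y + (pcond y η * prior η) • A η with hG
  -- gradient of the conditional density at each η
  have hgrad : ∀ η, HasGradientAt (fun y' => pcond y' η * prior η) (G η) y := by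
    intro η
    set E : ℝ := (inner ℝ η (T y) : ℝ) - φ η with hE
    -- fderiv of y' ↦ ⟪η, T y'⟫ - φ η
    have h1 : HasFDerivAt (fun y' => (inner ℝ η (T y') : ℝ) - φ η)
        ((innerSL ℝ η).comp B) y := by
      exact (((innerSL ℝ η).hasFDerivAt).comp y (hT y).hasFDerivAt).sub_const (φ η)
    have h2 : HasFDerivAt (fun y' => Real.exp ((inner ℝ η (T y') : ℝ) - φ η))
        (Real.exp E • ((innerSL ℝ η).comp B)) y := h1.exp
    have h3 : HasFDerivAt (fun y' => p₀ y' * Real.exp ((inner ℝ η (T y') : ℝ) - φ η))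
        (p₀ y • (Real.exp E • ((innerSL ℝ η).comp B)) +
          Real.exp E • fderiv ℝ p₀ y) y := hp₀diff.hasFDerivAt.mul h2
    have h4 : HasFDerivAt (fun y' => pcond y' η * prior η)
        (prior η • (p₀ y • (Real.exp E • ((innerSL ℝ η).comp B)) +
          Real.exp E • fderiv ℝ p₀ y)) y := by
      have := h3.mul_const (prior η)
      refine this.congr_of_eventuallyEq ?_
      filter_upwards with y' using by rw [hpcond]
    refine hasGradientAt_of_inner h4 ?_
    intro v
    have hadj : ⟪A η, v⟫ = ⟪η, B v⟫ := ContinuousLinearMap.adjoint_inner_left B v η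
    have hg0 : ⟪gradient p₀ y, v⟫ = fderiv ℝ p₀ y v := gradient_inner_eq hp₀diff v
    simp only [hG, inner_add_left, inner_smul_left, conj_trivial,
      ContinuousLinearMap.smul_apply, ContinuousLinearMap.add_apply,
      ContinuousLinearMap.coe_comp', Function.comp_apply, innerSL_apply_apply,
      smul_eq_mul, hadj, hg0, hpcond, ← hE]
    field_simp
    ring
  -- compute the integral of the gradients
  have hint1' : Integrable (fun η => ((p₀ y)⁻¹ * (pcond y η * prior η)) • gradient p₀ y) :=
    ((hint1.const_mul _).smul_const _)
  have hint2' : Integrable (fun η => (pcond y η * prior η) • A η) := by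
    have : Integrable (fun η => A ((pcond y η * prior η) • η)) := A.integrable_comp hint2
    simpa [_root_.map_smul] using this
  have hIG : (∫ η, G η) =
      ((p₀ y)⁻¹ * p y) • gradient p₀ y + A (∫ η, (pcond y η * prior η) • η) := by
    rw [hG, integral_add hint1' hint2']
    congr 1
    · rw [integral_smul_const, hp y, integral_const_mul]
    · rw [← A.integral_comp_comm hint2]
      simp [_root_.map_smul]
  have hDUI' : HasGradientAt p
      (((p₀ y)⁻¹ * p y) • gradient p₀ y + A (∫ η, (pcond y η * prior η) • η)) y := by
    rw [← hIG]
    have : (∫ η, gradient (fun y' => pcond y' η * prior η) y) = ∫ η, G η := by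
      congr 1; funext η; exact (hgrad η).gradient
    rwa [this] at hDUI
  -- gradient of log p
  have hlogp : HasGradientAt (fun y' => Real.log (p y'))
      ((p y)⁻¹ • (((p₀ y)⁻¹ * p y) • gradient p₀ y +
        A (∫ η, (pcond y η * prior η) • η))) y := by
    refine hasGradientAt_of_inner (hDUI'.hasFDerivAt.log hpy.ne') ?_
    intro v
    rw [real_inner_smul_left, ContinuousLinearMap.smul_apply,
      InnerProductSpace.toDual_apply_apply, smul_eq_mul]
  -- gradient of log p₀
  have hlogp₀ : HasGradientAt (fun y' => Real.log (p₀ y')) ((p₀ y)⁻¹ • gradient p₀ y) y := by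
    refine hasGradientAt_of_inner (hp₀diff.hasFDerivAt.log hp₀y.ne') ?_
    intro v
    rw [real_inner_smul_left, gradient_inner_eq hp₀diff v,
      ContinuousLinearMap.smul_apply, smul_eq_mul]
  rw [hlogp.gradient, hlogp₀.gradient, hηhat, _root_.map_smul]
  have hpyne : p y ≠ 0 := hpy.ne'
  have hp₀yne : p₀ y ≠ 0 := hp₀y.ne'
  rw [smul_add, smul_smul]
  rw [show (p y)⁻¹ * ((p₀ y)⁻¹ * p y) = (p₀ y)⁻¹ by
    rw [mul_comm (p₀ y)⁻¹, ← mul_assoc, inv_mul_cancel₀ hpyne, one_mul]]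
  abel
end

section
/- Fix y ∈ ℝⁿ and σ > 0, and let h_y : ℝⁿ → ℝ be the isotropic Gaussian likelihood density h_y(u) = (2πσ²)^{−n/2} exp(−‖y − u‖²/(2σ²)). Let A : ℝᵈ → ℝⁿ be continuously differentiable with M := sup_{x∈ℝᵈ} ‖∇_x A(x)‖ < ∞ (operator norm of the Jacobian), and let X be an integrable random vector on ℝᵈ with mean x̂ = E[X] and m₁ := E[‖X − x̂‖] < ∞. Then the Jensen gap of the map x ↦ h_y(A(x)) at X is bounded by |E[h_y(A(X))] − h_y(A(x̂))| ≤ (e^{−1/2} / (σ·(2πσ²)^{n/2})) · M · m₁. -/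
open MeasureTheory Real

lemma key_scalar (t : ℝ) : t * Real.exp (-t ^ 2 / 2) ≤ Real.exp (-(1:ℝ) / 2) := by
  have h1 : t ≤ Real.exp (t - 1) := by
    have := Real.add_one_le_exp (t - 1); linarith
  calc t * Real.exp (-t ^ 2 / 2) ≤ Real.exp (t - 1) * Real.exp (-t ^ 2 / 2) := by
        exact mul_le_mul_of_nonneg_right h1 (Real.exp_pos _).le
    _ = Real.exp (t - 1 + -t ^ 2 / 2) := (Real.exp_add _ _).symm
    _ ≤ Real.exp (-(1:ℝ) / 2) := by
        apply Real.exp_le_exp.2; nlinarith [sq_nonneg (t - 1)]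

/-- **Jensen gap bound for diffusion posterior sampling (DPS, Theorem 1).**
Fix `y ∈ ℝⁿ` and `σ > 0`, and let `h_y(u) = (2πσ²)^{−n/2} exp(−‖y − u‖²/(2σ²))` be the
Gaussian measurement likelihood. Let `A : ℝᵈ → ℝⁿ` be continuously differentiable with
bounded Jacobian `M = ⨆ x, ‖∇A(x)‖`, and let `X` be an integrable random vector with
mean `x̂ = E[X]` and `m₁ = E[‖X − x̂‖] < ∞`. Then
`|E[h_y(A(X))] − h_y(A(x̂))| ≤ (e^{−1/2}/(σ(2πσ²)^{n/2})) · M · m₁`. -/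
theorem dps_jensen_gap_bound
    {d n : ℕ} {Ω : Type*} [MeasurableSpace Ω] (μ : Measure Ω) [IsProbabilityMeasure μ]
    (y : EuclideanSpace ℝ (Fin n)) (σ : ℝ) (hσ : 0 < σ)
    (hY : EuclideanSpace ℝ (Fin n) → ℝ)
    (hhY : ∀ u, hY u = (2 * π * σ ^ 2) ^ (-(n : ℝ) / 2) *
      Real.exp (-‖y - u‖ ^ 2 / (2 * σ ^ 2)))
    (A : EuclideanSpace ℝ (Fin d) → EuclideanSpace ℝ (Fin n))
    (hA : ContDiff ℝ 1 A)
    (hAbdd : BddAbove (Set.range fun x => ‖fderiv ℝ A x‖))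
    (X : Ω → EuclideanSpace ℝ (Fin d))
    (hX : Integrable X μ)
    (hm₁ : Integrable (fun ω => ‖X ω - ∫ ω', X ω' ∂μ‖) μ) :
    |(∫ ω, hY (A (X ω)) ∂μ) - hY (A (∫ ω, X ω ∂μ))|
      ≤ (Real.exp (-(1 : ℝ) / 2) / (σ * (2 * π * σ ^ 2) ^ ((n : ℝ) / 2)))
        * (⨆ x, ‖fderiv ℝ A x‖)
        * ∫ ω, ‖X ω - ∫ ω', X ω' ∂μ‖ ∂μ := by
  have hπσ : (0:ℝ) < 2 * π * σ ^ 2 := by positivity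
  set C : ℝ := (2 * π * σ ^ 2) ^ (-(n : ℝ) / 2) with hC
  have hCpos : 0 < C := Real.rpow_pos_of_pos hπσ _
  set L₁ : ℝ := Real.exp (-(1:ℝ) / 2) / (σ * (2 * π * σ ^ 2) ^ ((n : ℝ) / 2)) with hL₁
  have hCeq : C = ((2 * π * σ ^ 2) ^ ((n : ℝ) / 2))⁻¹ := by
    rw [hC, ← Real.rpow_neg hπσ.le]; ring_nf
  have hL₁eq : L₁ = C * Real.exp (-(1:ℝ) / 2) / σ := by
    rw [hL₁, hCeq]; field_simp
  have hL₁pos : 0 < L₁ := by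
    rw [hL₁eq]; positivity
  set M : ℝ := ⨆ x, ‖fderiv ℝ A x‖ with hM
  have hMle : ∀ x, ‖fderiv ℝ A x‖ ≤ M := fun x => le_ciSup hAbdd x
  have hM0 : 0 ≤ M := le_trans (norm_nonneg _) (hMle 0)
  -- scalar function
  set f : ℝ → ℝ := fun r => C * Real.exp (-r ^ 2 / (2 * σ ^ 2)) with hf
  have hderiv : ∀ r : ℝ, HasDerivAt f (C * (Real.exp (-r ^ 2 / (2 * σ ^ 2)) * (-r / σ ^ 2))) r := by
    intro r
    have h1 : HasDerivAt (fun r : ℝ => -r ^ 2 / (2 * σ ^ 2)) (-r / σ ^ 2) r := by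
      have := ((hasDerivAt_pow 2 r).neg).div_const (2 * σ ^ 2)
      refine this.congr_deriv ?_
      field_simp; ring
    exact (h1.exp.const_mul C)
  have hderivbound : ∀ r : ℝ, ‖C * (Real.exp (-r ^ 2 / (2 * σ ^ 2)) * (-r / σ ^ 2))‖ ≤ L₁ := by
    intro r
    have key := key_scalar (|r| / σ)
    have hsq : (|r| / σ) ^ 2 = r ^ 2 / σ ^ 2 := by
      rw [div_pow, sq_abs]
    rw [hsq] at key
    have hexp_eq : -(r ^ 2 / σ ^ 2) / 2 = -r ^ 2 / (2 * σ ^ 2) := by ring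
    rw [hexp_eq] at key
    have : ‖C * (Real.exp (-r ^ 2 / (2 * σ ^ 2)) * (-r / σ ^ 2))‖
        = (C / σ) * (|r| / σ * Real.exp (-r ^ 2 / (2 * σ ^ 2))) := by
      rw [Real.norm_eq_abs, abs_mul, abs_mul, abs_of_pos hCpos, abs_div, abs_neg,
        abs_of_pos (by positivity : (0:ℝ) < σ ^ 2), Real.abs_exp]
      field_simp
    rw [this, hL₁eq]
    calc C / σ * (|r| / σ * Real.exp (-r ^ 2 / (2 * σ ^ 2)))
        ≤ C / σ * Real.exp (-(1:ℝ) / 2) :=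
          mul_le_mul_of_nonneg_left key (by positivity)
      _ = C * Real.exp (-(1:ℝ) / 2) / σ := by ring
  have hLipf : ∀ a b : ℝ, |f a - f b| ≤ L₁ * |a - b| := by
    intro a b
    have := convex_univ.norm_image_sub_le_of_norm_hasDerivWithin_le
      (f' := fun r => C * (Real.exp (-r ^ 2 / (2 * σ ^ 2)) * (-r / σ ^ 2)))
      (fun x _ => (hderiv x).hasDerivWithinAt) (fun x _ => hderivbound x)
      (Set.mem_univ b) (Set.mem_univ a)
    simpa [Real.norm_eq_abs] using this
  -- hY Lipschitz
  have hLiphY : ∀ u v, |hY u - hY v| ≤ L₁ * ‖u - v‖ := by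
    intro u v
    have h1 : hY u = f ‖y - u‖ := by rw [hhY u]
    have h2 : hY v = f ‖y - v‖ := by rw [hhY v]
    rw [h1, h2]
    refine le_trans (hLipf _ _) ?_
    apply mul_le_mul_of_nonneg_left _ hL₁pos.le
    have := abs_norm_sub_norm_le (y - u) (y - v)
    calc |‖y - u‖ - ‖y - v‖| ≤ ‖(y - u) - (y - v)‖ := this
      _ = ‖u - v‖ := by rw [show (y - u) - (y - v) = -(u - v) by abel, norm_neg]
  -- A Lipschitz
  have hLipA : ∀ u v, ‖A u - A v‖ ≤ M * ‖u - v‖ := by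
    intro u v
    exact convex_univ.norm_image_sub_le_of_norm_fderiv_le
      (fun x _ => hA.differentiable one_ne_zero x) (fun x _ => hMle x)
      (Set.mem_univ v) (Set.mem_univ u)
  set xhat : EuclideanSpace ℝ (Fin d) := ∫ ω', X ω' ∂μ with hxhat
  have hLipg : ∀ u, |hY (A u) - hY (A xhat)| ≤ L₁ * M * ‖u - xhat‖ := by
    intro u
    calc |hY (A u) - hY (A xhat)| ≤ L₁ * ‖A u - A xhat‖ := hLiphY _ _
      _ ≤ L₁ * (M * ‖u - xhat‖) := mul_le_mul_of_nonneg_left (hLipA _ _) hL₁pos.le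
      _ = L₁ * M * ‖u - xhat‖ := by ring
  -- measurability / integrability
  have hcont : Continuous fun u => hY (A u) := by
    have : Continuous hY := by
      have : Continuous f := by
        apply Continuous.mul continuous_const
        exact Real.continuous_exp.comp (by continuity)
      have h2 : ∀ u, hY u = f ‖y - u‖ := fun u => by rw [hhY u]
      simp only [funext h2]
      exact this.comp (continuous_const.sub continuous_id).norm
    exact this.comp hA.continuous
  have hXm : AEStronglyMeasurable X μ := hX.aestronglyMeasurable
  set F : Ω → ℝ := fun ω => hY (A (X ω)) - hY (A xhat) with hF
  have hFm : AEStronglyMeasurable F μ :=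
    ((hcont.comp_aestronglyMeasurable hXm).sub aestronglyMeasurable_const)
  have hFint : Integrable F μ := by
    refine Integrable.mono' (hm₁.const_mul (L₁ * M)) hFm ?_
    filter_upwards with ω
    rw [Real.norm_eq_abs]
    exact hLipg (X ω)
  have hgint : Integrable (fun ω => hY (A (X ω))) μ := by
    have : (fun ω => hY (A (X ω))) = fun ω => F ω + hY (A xhat) := by
      funext ω; simp [hF]
    rw [this]
    exact hFint.add (integrable_const _)
  have hsplit : (∫ ω, hY (A (X ω)) ∂μ) - hY (A xhat) = ∫ ω, F ω ∂μ := by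
    rw [hF]
    rw [integral_sub hgint (integrable_const _), integral_const]
    simp
  rw [hsplit]
  calc |∫ ω, F ω ∂μ| ≤ ∫ ω, |F ω| ∂μ := by
        simpa [Real.norm_eq_abs] using norm_integral_le_integral_norm F (μ := μ)
    _ ≤ ∫ ω, L₁ * M * ‖X ω - xhat‖ ∂μ := by
        apply integral_mono_of_nonneg (Filter.Eventually.of_forall fun ω => abs_nonneg _)
          (hm₁.const_mul (L₁ * M))
        filter_upwards with ω
        exact hLipg (X ω)
    _ = L₁ * M * ∫ ω, ‖X ω - xhat‖ ∂μ := integral_const_mul _ _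
end
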